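/- Let G be a connected graph of order n with minimum degree δ ≥ 3. Then γ^t_StR(G) ≤ n − ⌊(diam(G)+1)/3⌋. -/
import Mathlib


open Finset

variable {V : Type*} [Fintype V]

/-- The degree of a vertex. -/
noncomputable def degN (G : SimpleGraph V) (v : V) : ℕ := {u | G.Adj v u}.ncard

/-- Maximum degree. -/
noncomputable def maxDeg (G : SimpleGraph V) : ℕ := Finset.univ.sup (degN G)

/-- Minimum degree. -/
noncomputable def minDeg (G : SimpleGraph V) : ℕ := sInf {d | ∃ v, degN G v = d}

/-- No isolated vertex. -/
def NoIsolated (G : SimpleGraph V) : Prop := ∀ v, ∃ u, G.Adj v u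

/-- Total strong Roman dominating function. `(Δ+1)/2 = ⌈Δ/2⌉` and
`(m+1)/2 = ⌈m/2⌉` in natural-number arithmetic. -/
def IsTSRDF (G : SimpleGraph V) (f : V → ℕ) : Prop :=
  (∀ v, f v ≤ (maxDeg G + 1) / 2 + 1) ∧
  (∀ v, f v = 0 → ∃ u, G.Adj v u ∧
      1 + ({w | G.Adj u w ∧ f w = 0}.ncard + 1) / 2 ≤ f u) ∧
  (∀ v, 0 < f v → ∃ u, G.Adj v u ∧ 0 < f u)

/-- The total strong Roman domination number. -/
noncomputable def tsrd (G : SimpleGraph V) : ℕ :=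
  sInf {k | ∃ f : V → ℕ, IsTSRDF G f ∧ ∑ v, f v = k}

section Aux
open scoped Classical

/-- The labeling function used in the construction: the first `K` vertices of the
path get the pattern `0,2,0` in blocks of three, all other vertices get `1`. -/
noncomputable def pf (P : ℕ → V) (K : ℕ) : V → ℕ := fun x =>
  if h : ∃ i, i < K ∧ P i = x then (if Classical.choose h % 3 = 1 then 2 else 0) else 1

lemma pf_le_two (P : ℕ → V) (K : ℕ) (x : V) : pf P K x ≤ 2 := by
  unfold pf
  split
  · split <;> omega
  · omega

lemma pf_eq_zero {P : ℕ → V} {K : ℕ} {x : V} (h : pf P K x = 0) :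
    ∃ m, m < K ∧ m % 3 ≠ 1 ∧ P m = x := by
  unfold pf at h
  split at h
  · rename_i he
    refine ⟨Classical.choose he, (Classical.choose_spec he).1, ?_, (Classical.choose_spec he).2⟩
    intro hm
    rw [if_pos hm] at h
    omega
  · omega

lemma pf_apply {P : ℕ → V} {K : ℕ}
    (hinj : ∀ i j, i < K → j < K → P i = P j → i = j) {j : ℕ} (hj : j < K) :
    pf P K (P j) = if j % 3 = 1 then 2 else 0 := by
  unfold pf
  rw [dif_pos ⟨j, hj, rfl⟩]
  obtain ⟨h1, h2⟩ := Classical.choose_spec (⟨j, hj, rfl⟩ : ∃ i, i < K ∧ P i = P j)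
  rw [hinj _ _ h1 hj h2]

lemma pf_apply_off {P : ℕ → V} {K : ℕ} {x : V} (hx : ¬ ∃ i, i < K ∧ P i = x) :
    pf P K x = 1 := by
  unfold pf
  rw [dif_neg hx]

lemma sum_pattern (k : ℕ) :
    ∑ i ∈ Finset.range (3 * k), (if i % 3 = 1 then (2 : ℕ) else 0) = 2 * k := by
  induction k with
  | zero => simp
  | succ k ih =>
    have h3 : 3 * (k + 1) = (3 * k) + 1 + 1 + 1 := by ring
    rw [h3, Finset.sum_range_succ, Finset.sum_range_succ, Finset.sum_range_succ, ih]
    rw [if_neg (by omega), if_pos (by omega), if_neg (by omega)]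
    ring

lemma dist_getVert_le {G : SimpleGraph V} (hc : G.Connected) {a b : V}
    (p : G.Walk a b) (i : ℕ) : G.dist a (p.getVert i) ≤ i := by
  induction i with
  | zero => simp [p.getVert_zero]
  | succ i ih =>
    by_cases hi : i < p.length
    · have hadj : G.Adj (p.getVert i) (p.getVert (i + 1)) := p.adj_getVert_succ hi
      have h1 : G.dist (p.getVert i) (p.getVert (i + 1)) = 1 :=
        (SimpleGraph.dist_eq_one_iff_adj).2 hadj
      have := hc.dist_triangle (u := a) (v := p.getVert i) (w := p.getVert (i + 1))
      omega
    · have hPi : p.getVert (i + 1) = b := p.getVert_of_length_le (by omega)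
      have h2 : G.dist a b ≤ p.length := SimpleGraph.dist_le p
      rw [hPi]
      omega

end Aux

theorem stmt7 (G : SimpleGraph V) (hc : G.Connected) (hδ : 3 ≤ minDeg G) :
    tsrd G ≤ Fintype.card V - (G.diam + 1) / 3 := by
  classical
  have hne : Nonempty V := hc.nonempty
  -- a diametral geodesic
  obtain ⟨a, b, hab⟩ := SimpleGraph.exists_dist_eq_diam (G := G)
  obtain ⟨p, hp⟩ := hc.exists_walk_length_eq_dist a b
  set L : ℕ := p.length with hLdef
  set P : ℕ → V := p.getVert with hPdef
  have hL : L = G.diam := hp.trans hab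
  set k : ℕ := (G.diam + 1) / 3 with hkdef
  have h3k : 3 * k ≤ L + 1 := by rw [hL]; omega
  -- distances along the geodesic
  have hdistle : ∀ i, G.dist a (P i) ≤ i := fun i => dist_getVert_le hc p i
  have hdistle' : ∀ i, i ≤ L → G.dist (P i) b ≤ L - i := by
    intro i hi
    have h1 : G.dist b (p.reverse.getVert (L - i)) ≤ L - i := dist_getVert_le hc p.reverse (L - i)
    rw [p.getVert_reverse, show p.length - (L - i) = i by omega] at h1
    rwa [SimpleGraph.dist_comm] at h1
  have hA : ∀ i, i ≤ L → G.dist a (P i) = i := by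
    intro i hi
    have h1 := hdistle i
    have h2 := hdistle' i hi
    have h3 : G.dist a b ≤ G.dist a (P i) + G.dist (P i) b := hc.dist_triangle
    have h4 : G.dist a b = L := hp ▸ rfl
    omega
  have hB : ∀ i j, i ≤ L → j ≤ L → j ≤ i + G.dist (P i) (P j) := by
    intro i j hi hj
    have h1 : G.dist a (P j) ≤ G.dist a (P i) + G.dist (P i) (P j) := hc.dist_triangle
    rw [hA i hi, hA j hj] at h1
    exact h1
  have hinj : ∀ i j, i < 3 * k → j < 3 * k → P i = P j → i = j := by
    intro i j hi hj hij
    have h1 := hA i (by omega)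
    have h2 := hA j (by omega)
    rw [hij] at h1
    omega
  -- the labeling
  set f : V → ℕ := pf P (3 * k) with hfdef
  -- degrees
  have hdeg : ∀ x, 3 ≤ ({w | G.Adj x w} : Set V).ncard := by
    intro x
    have h1 : minDeg G ≤ degN G x := Nat.sInf_le ⟨x, rfl⟩
    have := hδ
    unfold degN at h1
    omega
  -- every vertex has at most two zero-labeled neighbors
  have hZ2 : ∀ x, ({w | G.Adj x w ∧ f w = 0} : Set V).ncard ≤ 2 := by
    intro x
    by_contra hcon
    push_neg at hcon
    obtain ⟨t, hts, ht3⟩ := Set.exists_subset_card_eq (show 3 ≤ _ from hcon)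
    rw [Set.ncard_eq_three] at ht3
    obtain ⟨x1, x2, x3, h12, h13, h23, rfl⟩ := ht3
    have hx1 : G.Adj x x1 ∧ f x1 = 0 := hts (by simp)
    have hx2 : G.Adj x x2 ∧ f x2 = 0 := hts (by simp)
    have hx3 : G.Adj x x3 ∧ f x3 = 0 := hts (by simp)
    obtain ⟨m1, hm1, hr1, he1⟩ := pf_eq_zero hx1.2
    obtain ⟨m2, hm2, hr2, he2⟩ := pf_eq_zero hx2.2
    obtain ⟨m3, hm3, hr3, he3⟩ := pf_eq_zero hx3.2
    have hdpair : ∀ y z : V, G.Adj x y → G.Adj x z → G.dist y z ≤ 2 := by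
      intro y z hy hz
      have h1 : G.dist y z ≤ G.dist y x + G.dist x z := hc.dist_triangle
      have h2 : G.dist y x = 1 := (SimpleGraph.dist_eq_one_iff_adj).2 hy.symm
      have h3 : G.dist x z = 1 := (SimpleGraph.dist_eq_one_iff_adj).2 hz
      omega
    have hb12 := hB m1 m2 (by omega) (by omega)
    have hb21 := hB m2 m1 (by omega) (by omega)
    have hb13 := hB m1 m3 (by omega) (by omega)
    have hb31 := hB m3 m1 (by omega) (by omega)
    have hb23 := hB m2 m3 (by omega) (by omega)
    have hd12 : G.dist (P m1) (P m2) ≤ 2 := by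
      rw [he1, he2]; exact hdpair _ _ hx1.1 hx2.1
    have hd13 : G.dist (P m1) (P m3) ≤ 2 := by
      rw [he1, he3]; exact hdpair _ _ hx1.1 hx3.1
    have hd23 : G.dist (P m2) (P m3) ≤ 2 := by
      rw [he2, he3]; exact hdpair _ _ hx2.1 hx3.1
    have hb32 := hB m3 m2 (by omega) (by omega)
    rw [SimpleGraph.dist_comm] at hb21 hb31 hb32
    have hne12 : m1 ≠ m2 := fun h => h12 (by rw [← he1, ← he2, h])
    have hne13 : m1 ≠ m3 := fun h => h13 (by rw [← he1, ← he3, h])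
    have hne23 : m2 ≠ m3 := fun h => h23 (by rw [← he2, ← he3, h])
    omega
  -- every vertex has a positively labeled neighbor
  have hpos : ∀ x, ∃ w, G.Adj x w ∧ 0 < f w := by
    intro x
    by_contra hcon
    push_neg at hcon
    have hsub : ({w | G.Adj x w} : Set V) ⊆ {w | G.Adj x w ∧ f w = 0} := by
      intro w hw
      exact ⟨hw, Nat.le_antisymm (hcon w hw) (Nat.zero_le _)⟩
    have h1 := Set.ncard_le_ncard hsub (Set.toFinite _)
    have h2 := hdeg x
    have h3 := hZ2 x
    omega
  -- maximum degree bound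
  have hmax : 3 ≤ maxDeg G := by
    obtain ⟨x⟩ := hne
    have h1 : minDeg G ≤ degN G x := Nat.sInf_le ⟨x, rfl⟩
    have h2 : degN G x ≤ maxDeg G := Finset.le_sup (Finset.mem_univ x)
    omega
  -- f is a TSRDF
  have hTSRDF : IsTSRDF G f := by
    refine ⟨fun v => ?_, fun v hv => ?_, fun v _ => hpos v⟩
    · rw [hfdef]
      have := pf_le_two P (3 * k) v
      omega
    · obtain ⟨m, hm, hr, he⟩ := pf_eq_zero hv
      have hm3 : m % 3 = 0 ∨ m % 3 = 2 := by omega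
      set j : ℕ := if m % 3 = 0 then m + 1 else m - 1 with hjdef
      have hj3 : j % 3 = 1 := by rcases hm3 with h | h <;> simp [hjdef, h] <;> omega
      have hjk : j < 3 * k := by rcases hm3 with h | h <;> simp [hjdef, h] <;> omega
      have hadj : G.Adj v (P j) := by
        rcases hm3 with h | h
        · have : j = m + 1 := by simp [hjdef, h]
          rw [this, ← he]
          exact p.adj_getVert_succ (by omega)
        · have hj' : j = m - 1 := by rw [hjdef, if_neg (by omega)]
          have hm1 : 2 ≤ m := by omega
          have : G.Adj (P (m - 1)) (P (m - 1 + 1)) := p.adj_getVert_succ (by omega)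
          rw [show m - 1 + 1 = m by omega, he] at this
          rw [hj']
          exact this.symm
      refine ⟨P j, hadj, ?_⟩
      have hfj : f (P j) = 2 := by
        rw [hfdef, pf_apply hinj hjk, if_pos hj3]
      rw [hfj]
      have := hZ2 (P j)
      omega
  -- the weight of f
  have hcard : ∀ i, i < 3 * k → i ≤ L := by omega
  set S : Finset V := (Finset.range (3 * k)).image P with hSdef
  have hScard : S.card = 3 * k := by
    rw [hSdef, Finset.card_image_of_injOn, Finset.card_range]
    intro i hi j hj hij
    exact hinj i j (Finset.mem_range.1 hi) (Finset.mem_range.1 hj) hij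
  have hSsum : ∑ v ∈ S, f v = 2 * k := by
    rw [hSdef, Finset.sum_image (fun i hi j hj hij =>
      hinj i j (Finset.mem_range.1 hi) (Finset.mem_range.1 hj) hij)]
    rw [← sum_pattern k]
    refine Finset.sum_congr rfl fun i hi => ?_
    rw [hfdef, pf_apply hinj (Finset.mem_range.1 hi)]
  have hScsum : ∑ v ∈ Sᶜ, f v = Fintype.card V - 3 * k := by
    have h1 : ∀ v ∈ Sᶜ, f v = 1 := by
      intro v hv
      rw [Finset.mem_compl] at hv
      refine pf_apply_off fun ⟨i, hi, hPi⟩ => hv ?_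
      rw [hSdef]
      exact Finset.mem_image.2 ⟨i, Finset.mem_range.2 hi, hPi⟩
    rw [Finset.sum_congr rfl h1, Finset.sum_const, smul_eq_mul, mul_one,
      Finset.card_compl, hScard]
  have hSle : 3 * k ≤ Fintype.card V := by
    rw [← hScard]
    exact Finset.card_le_card (Finset.subset_univ S)
  have hsum : ∑ v, f v = Fintype.card V - k := by
    rw [← Finset.sum_add_sum_compl S f, hSsum, hScsum]
    omega
  have : tsrd G ≤ Fintype.card V - k := Nat.sInf_le ⟨f, hTSRDF, hsum⟩
  rwa [hkdef] at this
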